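/- Let k ≥ 2 and let Δ be an Eulerian simplicial complex of dimension 2k − 1 with n ≥ 2k + 1 vertices that is (k−1)-neighborly. Then f_k(Δ) + k·(C(n, k) − f_{k−1}(Δ)) = Σ_{i=0}^{k} C(2k−i, k−1)·C(n−2k−1+i, i) + C(n−k−2, k−1). (The right-hand side equals the number of k-dimensional faces of the cyclic 2k-polytope with n vertices, and C(n, k) − f_{k−1}(Δ) equals m_{k−1}(Δ), the number of missing faces of cardinality k.) -/

import Mathlib

/-- A finite abstract simplicial complex on vertex set `Fin n`: a collection of subsets of
`Fin n` (the faces) closed under taking subsets and containing every singleton. -/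
structure AbsComplex (n : ℕ) where
  faces : Finset (Finset (Fin n))
  down_closed : ∀ F ∈ faces, ∀ G ⊆ F, G ∈ faces
  singleton_mem : ∀ v : Fin n, ({v} : Finset (Fin n)) ∈ faces

namespace AbsComplex

variable {n : ℕ}

/-- `fNum Δ i` is the number of faces of `Δ` of cardinality `i + 1`
(i.e. of dimension `i`). -/
def fNum (Δ : AbsComplex n) (i : ℕ) : ℕ :=
  (Δ.faces.filter fun F => F.card = i + 1).card

/-- A missing face of `Δ`: a set which is not a face but all of whose proper subsets
are faces. -/
def IsMissing (Δ : AbsComplex n) (F : Finset (Fin n)) : Prop :=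
  F ∉ Δ.faces ∧ ∀ G ⊂ F, G ∈ Δ.faces

/-- `mNum Δ i` is the number of missing faces of `Δ` of cardinality `i + 1`
(i.e. of dimension `i`). -/
noncomputable def mNum (Δ : AbsComplex n) (i : ℕ) : ℕ :=
  {F : Finset (Fin n) | Δ.IsMissing F ∧ F.card = i + 1}.ncard

/-- The faces of the link of the face `F` in `Δ`: all faces `G` with `G ∩ F = ∅`
and `G ∪ F` a face. -/
def linkFaces (Δ : AbsComplex n) (F : Finset (Fin n)) : Finset (Finset (Fin n)) :=
  Δ.faces.filter fun G => G ∩ F = ∅ ∧ G ∪ F ∈ Δ.faces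

/-- The reduced Euler characteristic `χ̃ = −1 + f₀ − f₁ + f₂ − ⋯` of a (downward closed,
nonempty) collection of faces, computed as `∑_F (−1)^{|F|−1}` over all faces `F`
(including the empty face). -/
def reducedEuler (s : Finset (Finset (Fin n))) : ℤ :=
  ∑ F ∈ s, (-1 : ℤ) ^ (F.card + 1)

/-- `Δ.IsEulerianDim D` says that `Δ` is an Eulerian complex of dimension `D`: every face has
cardinality at most `D + 1`, some face has cardinality `D + 1`, and for every face `F`
(including the empty face) the reduced Euler characteristic of the link of `F` equals
`(−1)^{D − |F|}` (written as `(−1)^{D + |F|}`, which has the same parity). -/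
def IsEulerianDim (Δ : AbsComplex n) (D : ℕ) : Prop :=
  (∀ F ∈ Δ.faces, F.card ≤ D + 1) ∧ (∃ F ∈ Δ.faces, F.card = D + 1) ∧
    ∀ F ∈ Δ.faces, reducedEuler (Δ.linkFaces F) = (-1 : ℤ) ^ (D + F.card)

/-- `Δ` is `j`-neighborly: every `j`-element subset of the vertex set is a face. -/
def Neighborly (Δ : AbsComplex n) (j : ℕ) : Prop :=
  ∀ S : Finset (Fin n), S.card = j → S ∈ Δ.faces

/-- `Δ` is flag: every missing face has cardinality `2`. -/
def Flag (Δ : AbsComplex n) : Prop :=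
  ∀ F : Finset (Fin n), Δ.IsMissing F → F.card = 2

end AbsComplex

open Finset

section BinomialLemmas

/-- Partial alternating sum of binomial coefficients. -/
private lemma aux_altsum (m : ℕ) : ∀ i : ℕ,
    ∑ j ∈ range (i+1), (-1:ℤ)^(i+j) * ((m+1).choose j) = (m.choose i : ℤ) := by
  intro i
  induction i with
  | zero => simp
  | succ i ih =>
    rw [sum_range_succ]
    have h1 : ∀ j ∈ range (i+1), (-1:ℤ)^(i+1+j) * ((m+1).choose j)
        = -((-1:ℤ)^(i+j) * ((m+1).choose j)) := by
      intro j _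
      have : i+1+j = (i+j)+1 := by omega
      rw [this, pow_succ]; ring
    rw [sum_congr rfl h1, sum_neg_distrib, ih]
    have h2 : (-1:ℤ)^(i+1+(i+1)) = 1 := by
      have : i+1+(i+1) = 2*(i+1) := by omega
      rw [this, pow_mul]; norm_num
    rw [h2, Nat.choose_succ_succ' m i]
    push_cast; ring

/-- I2: `∑_{j≤i} (−1)^{i−j} C(m−j, i−j) C(n,j) = C(n−m−1+i, i)` for `i ≤ m < n`. -/
private lemma aux_S_eval : ∀ (m i nn : ℕ), i ≤ m → m < nn →
    ∑ j ∈ range (i+1), (-1:ℤ)^(i+j) * ((m-j).choose (i-j) : ℤ) * (nn.choose j)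
      = ((nn-m-1+i).choose i : ℤ) := by
  intro m
  induction m with
  | zero =>
    intro i nn hi hn
    interval_cases i
    simp
  | succ m ih =>
    intro i nn hi hn
    rcases eq_or_lt_of_le hi with heq | hlt
    · -- i = m+1 : aux_altsum case
      have h1 : ∀ j ∈ range (i+1), (-1:ℤ)^(i+j) * ((m+1-j).choose (i-j) : ℤ) * (nn.choose j)
          = (-1:ℤ)^(i+j) * (nn.choose j) := by
        intro j hj
        rw [mem_range] at hj
        have : (m+1-j).choose (i-j) = 1 := by
          have : m+1-j = i-j := by omega
          rw [this, Nat.choose_self]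
        rw [this]
        push_cast; ring
      rw [sum_congr rfl h1]
      obtain ⟨nm, rfl⟩ : ∃ nm, nn = nm + 1 := ⟨nn - 1, by omega⟩
      rw [aux_altsum nm i]
      rw [show nm+1-(m+1)-1+i = nm from by omega]
    · -- i ≤ m : recurrence
      have hi' : i ≤ m := by omega
      rcases Nat.eq_zero_or_pos i with h0 | hpos
      · subst h0; simp
      have key : ∀ j ∈ range i, (-1:ℤ)^(i+j) * ((m+1-j).choose (i-j) : ℤ) * (nn.choose j)
          = (-1:ℤ)^(i+j) * ((m-j).choose (i-j) : ℤ) * (nn.choose j)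
            - (-1:ℤ)^(i-1+j) * ((m-j).choose (i-1-j) : ℤ) * (nn.choose j) := by
        intro j hj
        rw [mem_range] at hj
        have e1 : m+1-j = (m-j)+1 := by omega
        have e2 : i-j = (i-1-j)+1 := by omega
        rw [e1, e2, Nat.choose_succ_succ' (m-j) (i-1-j)]
        have e3 : (-1:ℤ)^(i+j) = -(-1:ℤ)^(i-1+j) := by
          have : i+j = (i-1+j)+1 := by omega
          rw [this, pow_succ]; ring
        rw [e3]
        push_cast
        ring_nf
      have hlast : ((m+1-i).choose (i-i) : ℤ) = ((m-i).choose (i-i) : ℤ) := by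
        rw [Nat.sub_self, Nat.choose_zero_right, Nat.choose_zero_right]
      rw [sum_range_succ, sum_congr rfl key, sum_sub_distrib, hlast]
      have ihA := ih i nn hi' (by omega)
      have ihB := ih (i-1) nn (by omega) (by omega)
      rw [sum_range_succ] at ihA
      have e4 : (i-1)+1 = i := by omega
      rw [e4] at ihB
      have e5 : ∀ j ∈ range i, (-1:ℤ)^(i-1+j) * ((m-j).choose (i-1-j) : ℤ) * (nn.choose j)
          = (-1:ℤ)^(i-1+j) * ((m-j).choose ((i-1)-j) : ℤ) * (nn.choose j) := by
        intro j _; rfl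
      rw [sum_congr rfl e5, ihB]
      have pas : ((nn-m-1+i).choose i : ℤ)
          = ((nn-(m+1)-1+i).choose (i-1) : ℤ) + ((nn-(m+1)-1+i).choose i : ℤ) := by
        have e6 : nn-m-1+i = (nn-(m+1)-1+i)+1 := by omega
        rw [e6]
        have hp := Nat.choose_succ_succ' (nn-(m+1)-1+i) (i-1)
        rw [e4] at hp
        rw [hp]; push_cast; ring
      have e7 : nn-m-1+(i-1) = nn-(m+1)-1+i := by omega
      rw [e7]
      linarith [ihA]

/-- Auxiliary summand for the finite-difference identity. -/
private def dfn (m p i j : ℕ) : ℤ := (-1:ℤ)^j * (m.choose j : ℤ) * ((p-j).choose i : ℤ)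

/-- I3: the `m`-th finite difference `∑_j (−1)^j C(m,j) C(p−j,i)`. -/
private lemma aux_diff_eval : ∀ (m p i : ℕ), m ≤ p →
    ∑ j ∈ range (m+1), dfn m p i j
      = if m ≤ i then ((p-m).choose (i-m) : ℤ) else 0 := by
  intro m
  induction m with
  | zero => intro p i _; simp [dfn]
  | succ m ih =>
    intro p i hp
    have h1 : ∀ j ∈ range (m+1), dfn (m+1) p i (j+1) = dfn m p i (j+1) - dfn m (p-1) i j := by
      intro j hj
      unfold dfn
      rw [Nat.choose_succ_succ m j]
      have e1 : p-(j+1) = (p-1)-j := by omega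
      rw [e1, pow_succ]
      push_cast; ring
    have h2 := sum_range_succ' (dfn (m+1) p i) (m+1)
    have h3 := sum_range_succ' (dfn m p i) (m+1)
    have h4 := sum_range_succ (dfn m p i) (m+1)
    have h5 : dfn m p i (m+1) = 0 := by
      unfold dfn
      rw [Nat.choose_succ_self m]
      push_cast; ring
    have h6 : dfn (m+1) p i 0 = dfn m p i 0 := by unfold dfn; norm_num
    have key : ∑ j ∈ range (m+2), dfn (m+1) p i j
        = (∑ j ∈ range (m+1), dfn m p i j) - ∑ j ∈ range (m+1), dfn m (p-1) i j := by
      rw [h2, sum_congr rfl h1, sum_sub_distrib, h6]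
      linarith [h3, h4, h5]
    rw [key, ih p i (by omega), ih (p-1) i (by omega)]
    rcases lt_trichotomy m i with hc | hc | hc
    · rcases eq_or_lt_of_le (Nat.succ_le_of_lt hc) with hc2 | hc2
      · -- m+1 = i
        rw [if_pos hc.le, if_pos hc.le, if_pos (le_of_eq hc2)]
        have a1 : p-m = (p-(m+1))+1 := by omega
        have a2 : i-m = (i-(m+1))+1 := by omega
        rw [a1, a2, Nat.choose_succ_succ' (p-(m+1)) (i-(m+1))]
        have a3 : (p-1)-m = p-(m+1) := by omega
        rw [a3]
        push_cast; ring
      · -- m+1 < i : same Pascal computation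
        rw [if_pos hc.le, if_pos hc.le, if_pos (le_of_lt hc2)]
        have a1 : p-m = (p-(m+1))+1 := by omega
        have a2 : i-m = (i-(m+1))+1 := by omega
        rw [a1, a2, Nat.choose_succ_succ' (p-(m+1)) (i-(m+1))]
        have a3 : (p-1)-m = p-(m+1) := by omega
        rw [a3]
        push_cast; ring
    · -- m = i
      subst hc
      rw [if_pos le_rfl, if_pos le_rfl, if_neg (by omega)]
      simp
    · -- m > i
      rw [if_neg (by omega), if_neg (by omega), if_neg (by omega)]
      ring

/-- The `h`-numbers of a sequence `F` (relative to top dimension `p`). -/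
private def hseq (p : ℕ) (F : ℕ → ℤ) (i : ℕ) : ℤ :=
  ∑ j ∈ range (i+1), (-1:ℤ)^(i+j) * ((p-j).choose (i-j) : ℤ) * F j

private lemma aux_sum_ite_le {M : Type*} [AddCommMonoid M] (N i : ℕ) (hi : i < N) (f : ℕ → M) :
    ∑ j ∈ range N, (if j ≤ i then f j else 0) = ∑ j ∈ range (i+1), f j := by
  rw [← sum_filter]
  congr 1
  ext x
  simp only [mem_filter, mem_range]
  omega

/-- Binomial inversion: recovering `F` from its `h`-numbers. -/
private lemma aux_L_inv (p m : ℕ) (F : ℕ → ℤ) (hm : m ≤ p) :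
    ∑ i ∈ range (m+1), ((p-i).choose (p-m) : ℤ) * hseq p F i = F m := by
  unfold hseq
  have step1 : ∀ i ∈ range (m+1),
      ((p-i).choose (p-m) : ℤ) * ∑ j ∈ range (i+1), (-1:ℤ)^(i+j) * ((p-j).choose (i-j):ℤ) * F j
      = ∑ j ∈ range (m+1), (if j ≤ i then
          ((p-i).choose (p-m) : ℤ) * ((-1:ℤ)^(i+j) * ((p-j).choose (i-j):ℤ) * F j) else 0) := by
    intro i hi
    rw [mem_range] at hi
    rw [aux_sum_ite_le (m+1) i (by omega), mul_sum]
  rw [sum_congr rfl step1, sum_comm]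
  have inner : ∀ j ∈ range (m+1),
      (∑ i ∈ range (m+1), if j ≤ i then
          ((p-i).choose (p-m) : ℤ) * ((-1:ℤ)^(i+j) * ((p-j).choose (i-j):ℤ) * F j) else 0)
      = if j = m then F j else 0 := by
    intro j hj
    rw [mem_range] at hj
    have hfilter : (range (m+1)).filter (fun i => j ≤ i) = Ico j (m+1) := by
      ext x; simp only [mem_filter, mem_range, mem_Ico]; omega
    rw [← sum_filter, hfilter, sum_Ico_eq_sum_range]
    have hrange : m + 1 - j = (m - j) + 1 := by omega
    rw [hrange]
    have term_eq : ∀ a ∈ range ((m-j)+1),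
        ((p-(j+a)).choose (p-m) : ℤ) * ((-1:ℤ)^((j+a)+j) * ((p-j).choose ((j+a)-j):ℤ) * F j)
        = ((p-j).choose (p-m) : ℤ) * F j * ((-1:ℤ)^a * ((m-j).choose a : ℤ)) := by
      intro a ha
      rw [mem_range] at ha
      have ha' : a ≤ m - j := by omega
      have e1 : (j+a)-j = a := by omega
      have e2 : (-1:ℤ)^((j+a)+j) = (-1:ℤ)^a := by
        rw [show (j+a)+j = 2*j+a from by omega, pow_add, pow_mul]
        norm_num
      rw [e1, e2]
      have prod_id : (p-(j+a)).choose (p-m) * (p-j).choose a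
          = (p-j).choose (p-m) * (m-j).choose a := by
        have s1 : (p-j).choose a = (p-j).choose ((p-j)-a) :=
          (Nat.choose_symm (by omega)).symm
        have s2 : p-(j+a) = (p-j)-a := by omega
        rw [s1, s2, mul_comm, Nat.choose_mul (n := p-j) (k := (p-j)-a) (s := p-m) (by omega)]
        have s3 : (p-j)-(p-m) = m-j := by omega
        have s4 : ((p-j)-a)-(p-m) = (m-j)-a := by omega
        rw [s3, s4, Nat.choose_symm ha']
      have hcast := congrArg (fun x : ℕ => (x : ℤ)) prod_id
      push_cast at hcast
      linear_combination ((-1:ℤ)^a * F j) * hcast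
    rw [sum_congr rfl term_eq, ← mul_sum, Int.alternating_sum_range_choose]
    by_cases hjm : j = m
    · subst hjm
      simp [Nat.sub_self]
    · rw [if_neg (by omega), if_neg hjm]
      ring
  rw [sum_congr rfl inner]
  simp


/-- Dehn–Sommerville symmetry of `h`-numbers for sequences satisfying the Eulerian
relations. -/
private lemma aux_L_DS (p : ℕ) (hp : Even p) (F : ℕ → ℤ)
    (hrel : ∀ i, ∑ m ∈ range (p+1), (-1:ℤ)^m * (m.choose i : ℤ) * F m = F i)
    (i : ℕ) (hi : i ≤ p) :
    hseq p F (p-i) = hseq p F i := by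
  unfold hseq
  -- Step 1 : rewrite h_{p-i} as a sum over range (p+1) with coefficient C(p-j, i)
  have step1 : ∑ j ∈ range ((p-i)+1), (-1:ℤ)^((p-i)+j) * ((p-j).choose ((p-i)-j) : ℤ) * F j
      = ∑ j ∈ range (p+1), (-1:ℤ)^(i+j) * ((p-j).choose i : ℤ) * F j := by
    have e1 : ∀ j ∈ range ((p-i)+1),
        (-1:ℤ)^((p-i)+j) * ((p-j).choose ((p-i)-j) : ℤ) * F j
        = (-1:ℤ)^(i+j) * ((p-j).choose i : ℤ) * F j := by
      intro j hj
      rw [mem_range] at hj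
      have c1 : (p-j).choose ((p-i)-j) = (p-j).choose i := by
        have : (p-i)-j = (p-j)-i := by omega
        rw [this, Nat.choose_symm (by omega)]
      have c2 : (-1:ℤ)^((p-i)+j) = (-1:ℤ)^(i+j) := by
        obtain ⟨t, ht⟩ := hp
        have : (p-i)+j+(2*i) = 2*t+(i+j) := by omega
        have h2 := congrArg (fun e => (-1:ℤ)^e) this
        simp only [pow_add, pow_mul] at h2
        norm_num at h2
        rw [pow_add, pow_add, h2]
      rw [c1, c2]
    rw [sum_congr rfl e1]
    apply sum_subset
    · intro x hx; rw [mem_range] at *; omega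
    · intro x hx hnx
      rw [mem_range] at hx hnx
      have : (p-x).choose i = 0 := Nat.choose_eq_zero_of_lt (by omega)
      rw [this]
      push_cast; ring
  rw [step1]
  -- Step 2 : substitute the Eulerian relation for F j and swap sums
  have step2 : ∀ j ∈ range (p+1), (-1:ℤ)^(i+j) * ((p-j).choose i : ℤ) * F j
      = ∑ m ∈ range (p+1), (-1:ℤ)^(i+m) * F m * dfn m p i j := by
    intro j _
    rw [← hrel j, mul_sum]
    apply sum_congr rfl
    intro m _
    unfold dfn
    have : (-1:ℤ)^(i+j) * (-1:ℤ)^m = (-1:ℤ)^(i+m) * (-1:ℤ)^j := by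
      rw [← pow_add, ← pow_add, show i+j+m = i+m+j from by omega]
    linear_combination ((m.choose j : ℤ) * ((p-j).choose i : ℤ) * F m) * this
  rw [sum_congr rfl step2, sum_comm]
  -- Step 3 : evaluate the inner sums by aux_diff_eval
  have step3 : ∀ m ∈ range (p+1),
      ∑ j ∈ range (p+1), (-1:ℤ)^(i+m) * F m * dfn m p i j
      = (-1:ℤ)^(i+m) * F m * (if m ≤ i then ((p-m).choose (i-m) : ℤ) else 0) := by
    intro m hm
    rw [mem_range] at hm
    rw [← mul_sum]
    congr 1
    rw [← aux_diff_eval m p i (by omega)]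
    symm
    apply sum_subset
    · intro x hx; rw [mem_range] at *; omega
    · intro x hx hnx
      rw [mem_range] at hx hnx
      unfold dfn
      rw [Nat.choose_eq_zero_of_lt (by omega)]
      push_cast; ring
  rw [sum_congr rfl step3]
  -- Step 4 : truncate to range (i+1)
  have gdef : ∀ j ∈ range (i+1),
      (-1:ℤ)^(i+j) * ((p-j).choose (i-j) : ℤ) * F j
      = (-1:ℤ)^(i+j) * F j * (if j ≤ i then ((p-j).choose (i-j) : ℤ) else 0) := by
    intro j hj
    rw [mem_range] at hj
    rw [if_pos (by omega)]
    ring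
  rw [sum_congr rfl gdef]
  symm
  apply sum_subset
  · intro x hx; rw [mem_range] at *; omega
  · intro x hx hnx
    rw [mem_range] at hx hnx
    rw [if_neg (by omega)]
    ring


end BinomialLemmas

namespace AbsComplex

variable {n : ℕ}


/-- The number of faces of cardinality `m`, as an integer. -/
private def Fc (Δ : AbsComplex n) (m : ℕ) : ℤ := ((Δ.faces.filter fun F => F.card = m).card : ℤ)

/-- The Eulerian relations (Dehn–Sommerville relations in `f`-vector form). -/
private lemma aux_rel (Δ : AbsComplex n) (D : ℕ) (hD : Odd D) (hEul : Δ.IsEulerianDim D) (i : ℕ) :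
    ∑ m ∈ range (D+2), (-1:ℤ)^m * (m.choose i : ℤ) * Fc Δ m = Fc Δ i := by
  obtain ⟨hcard, -, heul⟩ := hEul
  -- Step A : sum of the Eulerian condition over all faces of cardinality i
  have stepA : ∑ F ∈ Δ.faces.filter (fun F => F.card = i),
        reducedEuler (Δ.linkFaces F) = (-1:ℤ)^(D+i) * Fc Δ i := by
    have h1 : ∀ F ∈ Δ.faces.filter (fun F => F.card = i),
        reducedEuler (Δ.linkFaces F) = (-1:ℤ)^(D+i) := by
      intro F hF
      rw [mem_filter] at hF
      rw [heul F hF.1, hF.2]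
    rw [sum_congr rfl h1, sum_const, nsmul_eq_mul, Fc]
    ring
  -- Step B : double counting via the bijection (F, G) ↦ (G ∪ F, F)
  have stepB : ∑ F ∈ Δ.faces.filter (fun F => F.card = i),
        reducedEuler (Δ.linkFaces F)
      = ∑ H ∈ Δ.faces, ∑ S ∈ H.powersetCard i, (-1:ℤ)^((H \ S).card + 1) := by
    unfold reducedEuler
    rw [sum_sigma' (Δ.faces.filter (fun F => F.card = i)) (fun F => Δ.linkFaces F)
        (fun _ G => (-1:ℤ)^(G.card + 1)),
        sum_sigma' Δ.faces (fun H => H.powersetCard i)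
        (fun H S => (-1:ℤ)^((H \ S).card + 1))]
    apply sum_nbij' (i := fun x => (⟨x.2 ∪ x.1, x.1⟩ : Σ _ : Finset (Fin n), Finset (Fin n)))
      (j := fun x => (⟨x.2, x.1 \ x.2⟩ : Σ _ : Finset (Fin n), Finset (Fin n)))
    · rintro ⟨F, G⟩ hx
      rw [mem_sigma, mem_filter] at hx
      obtain ⟨⟨hFf, hFc⟩, hG⟩ := hx
      unfold linkFaces at hG
      rw [mem_filter] at hG
      obtain ⟨hGf, hGF, hGuF⟩ := hG
      rw [mem_sigma]
      refine ⟨hGuF, ?_⟩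
      rw [mem_powersetCard]
      exact ⟨subset_union_right, hFc⟩
    · rintro ⟨H, S⟩ hx
      rw [mem_sigma, mem_powersetCard] at hx
      obtain ⟨hHf, hSH, hSc⟩ := hx
      rw [mem_sigma, mem_filter]
      refine ⟨⟨Δ.down_closed H hHf S hSH, hSc⟩, ?_⟩
      unfold linkFaces
      rw [mem_filter]
      refine ⟨Δ.down_closed H hHf _ (sdiff_subset), ?_, ?_⟩
      · rw [← disjoint_iff_inter_eq_empty]
        exact disjoint_sdiff_self_left
      · rw [sdiff_union_of_subset hSH]
        exact hHf
    · rintro ⟨F, G⟩ hx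
      rw [mem_sigma, mem_filter] at hx
      obtain ⟨⟨hFf, hFc⟩, hG⟩ := hx
      unfold linkFaces at hG
      rw [mem_filter] at hG
      obtain ⟨hGf, hGF, hGuF⟩ := hG
      have : (G ∪ F) \ F = G := by
        apply union_sdiff_cancel_right
        rwa [disjoint_iff_inter_eq_empty]
      rw [Sigma.mk.inj_iff]
      exact ⟨rfl, heq_of_eq this⟩
    · rintro ⟨H, S⟩ hx
      rw [mem_sigma, mem_powersetCard] at hx
      obtain ⟨hHf, hSH, hSc⟩ := hx
      rw [Sigma.mk.inj_iff]
      exact ⟨sdiff_union_of_subset hSH, HEq.rfl⟩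
    · rintro ⟨F, G⟩ hx
      rw [mem_sigma, mem_filter] at hx
      obtain ⟨⟨hFf, hFc⟩, hG⟩ := hx
      unfold linkFaces at hG
      rw [mem_filter] at hG
      obtain ⟨hGf, hGF, hGuF⟩ := hG
      have : (G ∪ F) \ F = G := by
        apply union_sdiff_cancel_right
        rwa [disjoint_iff_inter_eq_empty]
      rw [this]
  -- Step C : evaluate the inner sums
  have stepC : ∑ H ∈ Δ.faces, ∑ S ∈ H.powersetCard i, (-1:ℤ)^((H \ S).card + 1)
      = ∑ m ∈ range (D+2), Fc Δ m * ((m.choose i : ℤ) * (-1:ℤ)^(m - i + 1)) := by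
    have h1 : ∀ H ∈ Δ.faces, ∑ S ∈ H.powersetCard i, (-1:ℤ)^((H \ S).card + 1)
        = (H.card.choose i : ℤ) * (-1:ℤ)^(H.card - i + 1) := by
      intro H hH
      have h2 : ∀ S ∈ H.powersetCard i, (-1:ℤ)^((H \ S).card + 1)
          = (-1:ℤ)^(H.card - i + 1) := by
        intro S hS
        rw [mem_powersetCard] at hS
        rw [card_sdiff_of_subset hS.1, hS.2]
      rw [sum_congr rfl h2, sum_const, card_powersetCard, nsmul_eq_mul]
    rw [sum_congr rfl h1]
    rw [← sum_fiberwise_of_maps_to (g := fun H => H.card) (t := range (D+2))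
        (fun H hH => by rw [mem_range]; exact Nat.lt_succ_of_le (Nat.lt_succ_iff.mp
          (Nat.lt_succ_of_le (hcard H hH))))]
    apply sum_congr rfl
    intro m hm
    have h3 : ∀ H ∈ Δ.faces.filter (fun H => H.card = m),
        (H.card.choose i : ℤ) * (-1:ℤ)^(H.card - i + 1)
        = (m.choose i : ℤ) * (-1:ℤ)^(m - i + 1) := by
      intro H hH
      rw [mem_filter] at hH
      rw [hH.2]
    rw [sum_congr rfl h3, sum_const, nsmul_eq_mul, Fc]
    try ring
  -- Combine and clean up signs
  have E1 : ∑ m ∈ range (D+2), Fc Δ m * ((m.choose i : ℤ) * (-1:ℤ)^(m - i + 1))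
      = (-1:ℤ)^(D+i) * Fc Δ i := by
    rw [← stepC, ← stepB, stepA]
  have E2 := congrArg (fun x => x * (-1:ℤ)^(i+1)) E1
  simp only [sum_mul] at E2
  have E3 : ∀ m ∈ range (D+2),
      Fc Δ m * ((m.choose i : ℤ) * (-1:ℤ)^(m - i + 1)) * (-1:ℤ)^(i+1)
      = (-1:ℤ)^m * (m.choose i : ℤ) * Fc Δ m := by
    intro m _
    by_cases him : i ≤ m
    · have : (-1:ℤ)^(m-i+1) * (-1:ℤ)^(i+1) = (-1:ℤ)^m := by
        rw [← pow_add, show m-i+1+(i+1) = m+2 from by omega, pow_add]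
        norm_num
      calc Fc Δ m * ((m.choose i : ℤ) * (-1:ℤ)^(m - i + 1)) * (-1:ℤ)^(i+1)
          = Fc Δ m * (m.choose i : ℤ) * ((-1:ℤ)^(m - i + 1) * (-1:ℤ)^(i+1)) := by ring
        _ = _ := by rw [this]; ring
    · rw [Nat.choose_eq_zero_of_lt (by omega)]
      push_cast; ring
  rw [sum_congr rfl E3] at E2
  have E4 : (-1:ℤ)^(D+i) * Fc Δ i * (-1:ℤ)^(i+1) = Fc Δ i := by
    obtain ⟨t, ht⟩ := hD
    have : (-1:ℤ)^(D+i) * (-1:ℤ)^(i+1) = 1 := by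
      rw [← pow_add, show D+i+(i+1) = 2*(t+i+1) from by omega, pow_mul]
      norm_num
    calc (-1:ℤ)^(D+i) * Fc Δ i * (-1:ℤ)^(i+1)
        = ((-1:ℤ)^(D+i) * (-1:ℤ)^(i+1)) * Fc Δ i := by ring
      _ = Fc Δ i := by rw [this]; ring
  rw [E4] at E2
  exact E2

/-- `Δ` is `r`-neighborly with `r ≤ n`: the number of faces of cardinality `m ≤ r`
is `C(n, m)`. -/
private lemma Fc_eq_choose (Δ : AbsComplex n) (r : ℕ) (hngh : Δ.Neighborly r) (hrn : r ≤ n)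
    (m : ℕ) (hm : m ≤ r) : Fc Δ m = (n.choose m : ℤ) := by
  have hset : Δ.faces.filter (fun F => F.card = m) = powersetCard m univ := by
    ext S
    simp only [mem_filter, mem_powersetCard_univ]
    constructor
    · exact fun h => h.2
    · intro hS
      refine ⟨?_, hS⟩
      obtain ⟨T, hST, -, hTc⟩ := exists_subsuperset_card_eq (n := r) (subset_univ S)
        (by rw [hS]; exact hm) (by rw [card_univ, Fintype.card_fin]; exact hrn)
      exact Δ.down_closed T (hngh T hTc) S hST
  rw [Fc, hset, card_powersetCard, card_univ, Fintype.card_fin]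

end AbsComplex

/-- For `k ≥ 2` and a `(k−1)`-neighborly Eulerian complex `Δ` of dimension
`2k − 1` with `n ≥ 2k + 1` vertices,
`f_k(Δ) + k·(C(n,k) − f_{k−1}(Δ)) = Σ_{i=0}^{k} C(2k−i, k−1)·C(n−2k−1+i, i) + C(n−k−2, k−1)`. -/
theorem statement2 {n k : ℕ} (hk : 2 ≤ k) (hn : 2 * k + 1 ≤ n) (Δ : AbsComplex n)
    (hEul : Δ.IsEulerianDim (2 * k - 1)) (hngh : Δ.Neighborly (k - 1)) :
    (Δ.fNum k : ℤ) + (k : ℤ) * ((n.choose k : ℤ) - (Δ.fNum (k - 1) : ℤ)) =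
      (∑ i ∈ Finset.range (k + 1),
          ((2 * k - i).choose (k - 1) : ℤ) * ((n - (2 * k + 1) + i).choose i : ℤ)) +
        ((n - (k + 2)).choose (k - 1) : ℤ) := by
  open Finset in
  have hrel : ∀ i, ∑ m ∈ range (2*k+1), (-1:ℤ)^m * (m.choose i : ℤ) * AbsComplex.Fc Δ m
      = AbsComplex.Fc Δ i := by
    intro i
    have h := AbsComplex.aux_rel Δ (2*k-1) ⟨k-1, by omega⟩ hEul i
    rwa [show 2*k-1+2 = 2*k+1 from by omega] at h
  have hFc : ∀ m, m ≤ k-1 → AbsComplex.Fc Δ m = (n.choose m : ℤ) :=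
    fun m hm => AbsComplex.Fc_eq_choose Δ (k-1) hngh (by omega) m hm
  have hval : ∀ i, i ≤ k-1 →
      hseq (2*k) (AbsComplex.Fc Δ) i = ((n-(2*k+1)+i).choose i : ℤ) := by
    intro i hi
    unfold hseq
    have e : ∀ j ∈ Finset.range (i+1),
        (-1:ℤ)^(i+j) * ((2*k-j).choose (i-j) : ℤ) * AbsComplex.Fc Δ j
        = (-1:ℤ)^(i+j) * ((2*k-j).choose (i-j) : ℤ) * (n.choose j : ℤ) := by
      intro j hj; rw [Finset.mem_range] at hj; rw [hFc j (by omega)]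
    rw [Finset.sum_congr rfl e, aux_S_eval (2*k) i n (by omega) (by omega)]
    rw [show n-(2*k)-1+i = n-(2*k+1)+i from by omega]
  have hkval : hseq (2*k) (AbsComplex.Fc Δ) k
      = ((n-(2*k+1)+k).choose k : ℤ) + (AbsComplex.Fc Δ k - (n.choose k : ℤ)) := by
    have base := aux_S_eval (2*k) k n (by omega) (by omega)
    unfold hseq
    rw [Finset.sum_range_succ]
    rw [Finset.sum_range_succ] at base
    have e : ∀ j ∈ Finset.range k,
        (-1:ℤ)^(k+j) * ((2*k-j).choose (k-j) : ℤ) * AbsComplex.Fc Δ j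
        = (-1:ℤ)^(k+j) * ((2*k-j).choose (k-j) : ℤ) * (n.choose j : ℤ) := by
      intro j hj; rw [Finset.mem_range] at hj; rw [hFc j (by omega)]
    rw [Finset.sum_congr rfl e]
    have l1 : (-1:ℤ)^(k+k) = 1 := by
      rw [show k+k = 2*k from by omega, pow_mul]; norm_num
    have l2 : (((2*k-k).choose (k-k) : ℕ) : ℤ) = 1 := by simp
    rw [l1, l2] at base ⊢
    rw [show n-2*k-1+k = n-(2*k+1)+k from by omega] at base
    linarith [base]
  have hDS : hseq (2*k) (AbsComplex.Fc Δ) (k+1) = hseq (2*k) (AbsComplex.Fc Δ) (k-1) := by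
    have h := aux_L_DS (2*k) (even_two_mul k) (AbsComplex.Fc Δ) hrel (k-1) (by omega)
    rwa [show 2*k-(k-1) = k+1 from by omega] at h
  have hinv := aux_L_inv (2*k) (k+1) (AbsComplex.Fc Δ) (by omega)
  rw [show 2*k-(k+1) = k-1 from by omega] at hinv
  rw [Finset.sum_range_succ, Finset.sum_range_succ] at hinv
  have c1 : (((2*k-k).choose (k-1) : ℕ) : ℤ) = (k:ℤ) := by
    rw [show 2*k-k = k from by omega]
    have h1 := Nat.choose_symm (show k-1 ≤ k by omega)
    rw [show k - (k-1) = 1 from by omega, Nat.choose_one_right] at h1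
    rw [← h1]
  have c2 : (((2*k-(k+1)).choose (k-1) : ℕ) : ℤ) = 1 := by
    rw [show 2*k-(k+1) = k-1 from by omega, Nat.choose_self]
    norm_num
  have esum : ∀ i ∈ Finset.range k,
      ((2*k-i).choose (k-1) : ℤ) * hseq (2*k) (AbsComplex.Fc Δ) i
      = ((2*k-i).choose (k-1) : ℤ) * ((n-(2*k+1)+i).choose i : ℤ) := by
    intro i hi; rw [Finset.mem_range] at hi; rw [hval i (by omega)]
  rw [Finset.sum_congr rfl esum, c1, c2, hkval, hDS, hval (k-1) le_rfl] at hinv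
  rw [show n-(2*k+1)+(k-1) = n-(k+2) from by omega] at hinv
  have gf1 : (Δ.fNum k : ℤ) = AbsComplex.Fc Δ (k+1) := rfl
  have gf2 : (Δ.fNum (k-1) : ℤ) = AbsComplex.Fc Δ k := by
    unfold AbsComplex.fNum AbsComplex.Fc
    rw [show k-1+1 = k from by omega]
  rw [gf1, gf2, Finset.sum_range_succ, c1]
  linear_combination -hinv
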